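/- For every pair of functions a, b : {-1,1}² → [-1,1] and every function c : {-1,1} → [-1,1], the sum over all (x₁,x₂,x₃) ∈ {-1,1}³ of Q_S(x₁,x₂,x₃) · a(x₁,x₂) · b(x₁,x₂) · c(x₃) is at most 4, where Q_S(x₁,x₂,x₃) = 1 - (1-x₁)(1-x₂)(1-x₃)/4 - (1+x₁)(1+x₂)(1+x₃)/4. Moreover the bound 4 is attained. -/

import Mathlib

noncomputable def QS (x₁ x₂ x₃ : ℝ) : ℝ :=
  1 - (1 - x₁) * (1 - x₂) * (1 - x₃) / 4 - (1 + x₁) * (1 + x₂) * (1 + x₃) / 4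

theorem stmt_3 :
    (∀ a b : ℝ → ℝ → ℝ, ∀ c : ℝ → ℝ,
      (∀ u ∈ ({-1, 1} : Finset ℝ), ∀ v ∈ ({-1, 1} : Finset ℝ), |a u v| ≤ 1) →
      (∀ u ∈ ({-1, 1} : Finset ℝ), ∀ v ∈ ({-1, 1} : Finset ℝ), |b u v| ≤ 1) →
      (∀ u ∈ ({-1, 1} : Finset ℝ), |c u| ≤ 1) →
      ∑ x₁ ∈ ({-1, 1} : Finset ℝ), ∑ x₂ ∈ ({-1, 1} : Finset ℝ), ∑ x₃ ∈ ({-1, 1} : Finset ℝ),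
        QS x₁ x₂ x₃ * a x₁ x₂ * b x₁ x₂ * c x₃ ≤ 4) ∧
    (∃ a b : ℝ → ℝ → ℝ, ∃ c : ℝ → ℝ,
      (∀ u ∈ ({-1, 1} : Finset ℝ), ∀ v ∈ ({-1, 1} : Finset ℝ), |a u v| ≤ 1) ∧
      (∀ u ∈ ({-1, 1} : Finset ℝ), ∀ v ∈ ({-1, 1} : Finset ℝ), |b u v| ≤ 1) ∧
      (∀ u ∈ ({-1, 1} : Finset ℝ), |c u| ≤ 1) ∧
      ∑ x₁ ∈ ({-1, 1} : Finset ℝ), ∑ x₂ ∈ ({-1, 1} : Finset ℝ), ∑ x₃ ∈ ({-1, 1} : Finset ℝ),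
        QS x₁ x₂ x₃ * a x₁ x₂ * b x₁ x₂ * c x₃ = 4) := by
  have hne : (-1 : ℝ) ≠ 1 := by norm_num
  have hm : (-1 : ℝ) ∈ ({-1, 1} : Finset ℝ) := by simp
  have hp : (1 : ℝ) ∈ ({-1, 1} : Finset ℝ) := by simp
  constructor
  · intro a b c ha hb hc
    have hA := abs_le.mp (show |a (-1) (-1) * b (-1) (-1)| ≤ 1 by
      rw [abs_mul]; exact mul_le_one₀ (ha _ hm _ hm) (abs_nonneg _) (hb _ hm _ hm))
    have hB := abs_le.mp (show |a (-1) 1 * b (-1) 1| ≤ 1 by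
      rw [abs_mul]; exact mul_le_one₀ (ha _ hm _ hp) (abs_nonneg _) (hb _ hm _ hp))
    have hC := abs_le.mp (show |a 1 (-1) * b 1 (-1)| ≤ 1 by
      rw [abs_mul]; exact mul_le_one₀ (ha _ hp _ hm) (abs_nonneg _) (hb _ hp _ hm))
    have hD := abs_le.mp (show |a 1 1 * b 1 1| ≤ 1 by
      rw [abs_mul]; exact mul_le_one₀ (ha _ hp _ hp) (abs_nonneg _) (hb _ hp _ hp))
    have hc1 := abs_le.mp (hc _ hm)
    have hc2 := abs_le.mp (hc _ hp)
    simp only [Finset.sum_pair hne, QS]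
    ring_nf
    nlinarith [mul_nonneg (by linarith [hA.1] : (0:ℝ) ≤ (1 + (a (-1) (-1) * b (-1) (-1)))) (by linarith [hc1.1] : (0:ℝ) ≤ (1 + c (-1))),
      mul_nonneg (by linarith [hA.1] : (0:ℝ) ≤ (1 + (a (-1) (-1) * b (-1) (-1)))) (by linarith [hc1.2] : (0:ℝ) ≤ (1 - c (-1))),
      mul_nonneg (by linarith [hA.1] : (0:ℝ) ≤ (1 + (a (-1) (-1) * b (-1) (-1)))) (by linarith [hc2.1] : (0:ℝ) ≤ (1 + c 1)),
      mul_nonneg (by linarith [hA.1] : (0:ℝ) ≤ (1 + (a (-1) (-1) * b (-1) (-1)))) (by linarith [hc2.2] : (0:ℝ) ≤ (1 - c 1)),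
      mul_nonneg (by linarith [hA.2] : (0:ℝ) ≤ (1 - (a (-1) (-1) * b (-1) (-1)))) (by linarith [hc1.1] : (0:ℝ) ≤ (1 + c (-1))),
      mul_nonneg (by linarith [hA.2] : (0:ℝ) ≤ (1 - (a (-1) (-1) * b (-1) (-1)))) (by linarith [hc1.2] : (0:ℝ) ≤ (1 - c (-1))),
      mul_nonneg (by linarith [hA.2] : (0:ℝ) ≤ (1 - (a (-1) (-1) * b (-1) (-1)))) (by linarith [hc2.1] : (0:ℝ) ≤ (1 + c 1)),
      mul_nonneg (by linarith [hA.2] : (0:ℝ) ≤ (1 - (a (-1) (-1) * b (-1) (-1)))) (by linarith [hc2.2] : (0:ℝ) ≤ (1 - c 1)),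
      mul_nonneg (by linarith [hB.1] : (0:ℝ) ≤ (1 + (a (-1) 1 * b (-1) 1))) (by linarith [hc1.1] : (0:ℝ) ≤ (1 + c (-1))),
      mul_nonneg (by linarith [hB.1] : (0:ℝ) ≤ (1 + (a (-1) 1 * b (-1) 1))) (by linarith [hc1.2] : (0:ℝ) ≤ (1 - c (-1))),
      mul_nonneg (by linarith [hB.1] : (0:ℝ) ≤ (1 + (a (-1) 1 * b (-1) 1))) (by linarith [hc2.1] : (0:ℝ) ≤ (1 + c 1)),
      mul_nonneg (by linarith [hB.1] : (0:ℝ) ≤ (1 + (a (-1) 1 * b (-1) 1))) (by linarith [hc2.2] : (0:ℝ) ≤ (1 - c 1)),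
      mul_nonneg (by linarith [hB.2] : (0:ℝ) ≤ (1 - (a (-1) 1 * b (-1) 1))) (by linarith [hc1.1] : (0:ℝ) ≤ (1 + c (-1))),
      mul_nonneg (by linarith [hB.2] : (0:ℝ) ≤ (1 - (a (-1) 1 * b (-1) 1))) (by linarith [hc1.2] : (0:ℝ) ≤ (1 - c (-1))),
      mul_nonneg (by linarith [hB.2] : (0:ℝ) ≤ (1 - (a (-1) 1 * b (-1) 1))) (by linarith [hc2.1] : (0:ℝ) ≤ (1 + c 1)),
      mul_nonneg (by linarith [hB.2] : (0:ℝ) ≤ (1 - (a (-1) 1 * b (-1) 1))) (by linarith [hc2.2] : (0:ℝ) ≤ (1 - c 1)),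
      mul_nonneg (by linarith [hC.1] : (0:ℝ) ≤ (1 + (a 1 (-1) * b 1 (-1)))) (by linarith [hc1.1] : (0:ℝ) ≤ (1 + c (-1))),
      mul_nonneg (by linarith [hC.1] : (0:ℝ) ≤ (1 + (a 1 (-1) * b 1 (-1)))) (by linarith [hc1.2] : (0:ℝ) ≤ (1 - c (-1))),
      mul_nonneg (by linarith [hC.1] : (0:ℝ) ≤ (1 + (a 1 (-1) * b 1 (-1)))) (by linarith [hc2.1] : (0:ℝ) ≤ (1 + c 1)),
      mul_nonneg (by linarith [hC.1] : (0:ℝ) ≤ (1 + (a 1 (-1) * b 1 (-1)))) (by linarith [hc2.2] : (0:ℝ) ≤ (1 - c 1)),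
      mul_nonneg (by linarith [hC.2] : (0:ℝ) ≤ (1 - (a 1 (-1) * b 1 (-1)))) (by linarith [hc1.1] : (0:ℝ) ≤ (1 + c (-1))),
      mul_nonneg (by linarith [hC.2] : (0:ℝ) ≤ (1 - (a 1 (-1) * b 1 (-1)))) (by linarith [hc1.2] : (0:ℝ) ≤ (1 - c (-1))),
      mul_nonneg (by linarith [hC.2] : (0:ℝ) ≤ (1 - (a 1 (-1) * b 1 (-1)))) (by linarith [hc2.1] : (0:ℝ) ≤ (1 + c 1)),
      mul_nonneg (by linarith [hC.2] : (0:ℝ) ≤ (1 - (a 1 (-1) * b 1 (-1)))) (by linarith [hc2.2] : (0:ℝ) ≤ (1 - c 1)),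
      mul_nonneg (by linarith [hD.1] : (0:ℝ) ≤ (1 + (a 1 1 * b 1 1))) (by linarith [hc1.1] : (0:ℝ) ≤ (1 + c (-1))),
      mul_nonneg (by linarith [hD.1] : (0:ℝ) ≤ (1 + (a 1 1 * b 1 1))) (by linarith [hc1.2] : (0:ℝ) ≤ (1 - c (-1))),
      mul_nonneg (by linarith [hD.1] : (0:ℝ) ≤ (1 + (a 1 1 * b 1 1))) (by linarith [hc2.1] : (0:ℝ) ≤ (1 + c 1)),
      mul_nonneg (by linarith [hD.1] : (0:ℝ) ≤ (1 + (a 1 1 * b 1 1))) (by linarith [hc2.2] : (0:ℝ) ≤ (1 - c 1)),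
      mul_nonneg (by linarith [hD.2] : (0:ℝ) ≤ (1 - (a 1 1 * b 1 1))) (by linarith [hc1.1] : (0:ℝ) ≤ (1 + c (-1))),
      mul_nonneg (by linarith [hD.2] : (0:ℝ) ≤ (1 - (a 1 1 * b 1 1))) (by linarith [hc1.2] : (0:ℝ) ≤ (1 - c (-1))),
      mul_nonneg (by linarith [hD.2] : (0:ℝ) ≤ (1 - (a 1 1 * b 1 1))) (by linarith [hc2.1] : (0:ℝ) ≤ (1 + c 1)),
      mul_nonneg (by linarith [hD.2] : (0:ℝ) ≤ (1 - (a 1 1 * b 1 1))) (by linarith [hc2.2] : (0:ℝ) ≤ (1 - c 1))]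
  · refine ⟨fun _ _ => 1, fun _ _ => 1, fun _ => 1, ?_, ?_, ?_, ?_⟩ <;>
      simp [Finset.sum_pair hne, QS] <;> norm_num
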